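/- Let p = 1 ≤ q < ∞, let v, w be weights on (a,b), and suppose that C > 0 is such that (∫_a^b (∫_a^t f)^q w(t) dt)^{1/q} ≤ C ∫_a^b f v holds for all f ∈ M⁺(a,b). Then for every ε > 0 there is a constant c, depending only on q and ε, such that (∫_a^t V^{(ε+1)q} w)^{1/q} ≤ c · C · V(t)^ε for every t ∈ (a,b); in particular A_ε ≤ c·C < ∞ for every ε > 0. -/

import Mathlib

open MeasureTheory Set Filter
open scoped ENNReal Topology

/-- The open subinterval of `ℝ` with extended-real endpoints `a` and `b`. -/
def EIoo (a b : EReal) : Set ℝ := {x : ℝ | a < (x : EReal) ∧ (x : EReal) < b}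

/-- A weight on `(a,b)`: a measurable function which is positive and finite a.e. on `(a,b)`. -/
def IsWeight (a b : EReal) (v : ℝ → ℝ≥0∞) : Prop :=
  Measurable v ∧ ∀ᵐ x ∂(volume.restrict (EIoo a b)), v x ≠ 0 ∧ v x ≠ ∞

/-- The function `V` in the case `1 < p`:  `V(t) = (∫_a^t v^{1-p'})^{1/p'}`, `p' = p/(p-1)`. -/
noncomputable def Vp (a : EReal) (p : ℝ) (v : ℝ → ℝ≥0∞) (t : ℝ) : ℝ≥0∞ :=
  (∫⁻ s in EIoo a (t : EReal), v s ^ (1 - p / (p - 1))) ^ ((p - 1) / p)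

/-- The function `V` in the case `p = 1`:  `V(t) = ess sup_{s ∈ (a,t)} 1/v(s)`. -/
noncomputable def V1 (a : EReal) (v : ℝ → ℝ≥0∞) (t : ℝ) : ℝ≥0∞ :=
  essSup (fun s => (v s)⁻¹) (volume.restrict (EIoo a (t : EReal)))

/-- `A_ε = sup_{t ∈ (a,b)} V(t)^{-ε} (∫_a^t V^{q(ε+1)} w)^{1/q}`. -/
noncomputable def Aeps (a b : EReal) (q ε : ℝ) (V w : ℝ → ℝ≥0∞) : ℝ≥0∞ :=
  ⨆ t ∈ EIoo a b,
    V t ^ (-ε) * (∫⁻ s in EIoo a (t : EReal), V s ^ (q * (ε + 1)) * w s) ^ (1 / q)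

/-- `B_{1,ε} = (∫_a^b (∫_a^t V^{q(ε+1)} w)^{r/p} V(t)^{q(ε+1)-εr} w(t) dt)^{1/r}`. -/
noncomputable def B1 (a b : EReal) (p q r ε : ℝ) (V w : ℝ → ℝ≥0∞) : ℝ≥0∞ :=
  (∫⁻ t in EIoo a b,
      (∫⁻ s in EIoo a (t : EReal), V s ^ (q * (ε + 1)) * w s) ^ (r / p) *
        (V t ^ (q * (ε + 1) - ε * r) * w t)) ^ (1 / r)

/-- The weighted Hardy inequality with constant `C`, case `p > 1`
(`RHS = C (∫_a^b f^p v)^{1/p}`). -/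
def HardyP (a b : EReal) (p q : ℝ) (v w : ℝ → ℝ≥0∞) (C : ℝ≥0∞) : Prop :=
  ∀ f : ℝ → ℝ≥0∞, Measurable f →
    (∫⁻ t in EIoo a b, (∫⁻ s in EIoo a (t : EReal), f s) ^ q * w t) ^ (1 / q)
      ≤ C * (∫⁻ x in EIoo a b, f x ^ p * v x) ^ (1 / p)

/-- The weighted Hardy inequality with constant `C`, case `p = 1`
(`RHS = C ∫_a^b f v`). -/
def Hardy1 (a b : EReal) (q : ℝ) (v w : ℝ → ℝ≥0∞) (C : ℝ≥0∞) : Prop :=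
  ∀ f : ℝ → ℝ≥0∞, Measurable f →
    (∫⁻ t in EIoo a b, (∫⁻ s in EIoo a (t : EReal), f s) ^ q * w t) ^ (1 / q)
      ≤ C * ∫⁻ x in EIoo a b, f x * v x

/-- `A_ε < ∞`, including the requirement that every subexpression (in particular
`V(t)` and the inner integral) is finite for every `t ∈ (a,b)`. -/
def AFin (a b : EReal) (q ε : ℝ) (V w : ℝ → ℝ≥0∞) : Prop :=
  (∀ t ∈ EIoo a b,
      V t ≠ ∞ ∧ (∫⁻ s in EIoo a (t : EReal), V s ^ (q * (ε + 1)) * w s) ≠ ∞) ∧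
    Aeps a b q ε V w ≠ ∞

/-- `B_{1,ε} < ∞`, including the requirement that every subexpression (in particular
`V(t)` and the inner integral) is finite for every `t ∈ (a,b)`. -/
def B1Fin (a b : EReal) (p q r ε : ℝ) (V w : ℝ → ℝ≥0∞) : Prop :=
  (∀ t ∈ EIoo a b,
      V t ≠ ∞ ∧ (∫⁻ s in EIoo a (t : EReal), V s ^ (q * (ε + 1)) * w s) ≠ ∞) ∧
    B1 a b p q r ε V w ≠ ∞

/-- necessity in the convex case `p = 1 ≤ q < ∞`: if the Hardy inequality
holds with constant `C`, then `(∫_a^t V^{(ε+1)q} w)^{1/q} ≤ c·C·V(t)^ε` for all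
`t ∈ (a,b)`; in particular `A_ε ≤ c·C < ∞`.  Here `c` depends only on `q, ε`. -/
lemma measurableSet_EIoo (a b : EReal) : MeasurableSet (EIoo a b) := by
  have h : EIoo a b = ((↑) : ℝ → EReal) ⁻¹' Set.Ioo a b := rfl
  rw [h]
  exact measurableSet_Ioo.preimage measurable_coe_real_ereal

lemma EIoo_subset_EIoo {a a' b b' : EReal} (ha : a' ≤ a) (hb : b ≤ b') :
    EIoo a b ⊆ EIoo a' b' := fun _ hx => ⟨lt_of_le_of_lt ha hx.1, lt_of_lt_of_le hx.2 hb⟩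

lemma V1_mono (a : EReal) (v : ℝ → ℝ≥0∞) : Monotone (V1 a v) := by
  intro t1 t2 h
  exact essSup_mono_measure' (Measure.restrict_mono
    (EIoo_subset_EIoo le_rfl (by exact_mod_cast h)) le_rfl)

lemma V1_measurable (a : EReal) (v : ℝ → ℝ≥0∞) : Measurable (V1 a v) :=
  (V1_mono a v).measurable

lemma ennreal_cancel_le {x Y W : ℝ≥0∞} (hx0 : x ≠ 0) (hxt : x ≠ ∞)
    (h : x * W ≤ Y) : W ≤ Y * x⁻¹ := by
  calc W = x⁻¹ * (x * W) := by
        rw [← mul_assoc, ENNReal.inv_mul_cancel hx0 hxt, one_mul]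
    _ ≤ x⁻¹ * Y := mul_le_mul_right h _
    _ = Y * x⁻¹ := mul_comm _ _

lemma ennreal_cancel_le' {x Y W : ℝ≥0∞} (hx0 : x ≠ 0) (hxt : x ≠ ∞)
    (h : W ≤ Y * x⁻¹) : x * W ≤ Y := by
  calc x * W ≤ x * (Y * x⁻¹) := mul_le_mul_right h _
    _ = Y * (x * x⁻¹) := by ring
    _ = Y := by rw [ENNReal.mul_inv_cancel hx0 hxt, mul_one]

/-- Key test-function estimate: `(∫_{(x,b)} w)^{1/q} ≤ C / λ` whenever `λ < V(x)`. -/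
lemma keyA {a b : EReal} {q : ℝ} (hq : 1 ≤ q) {v w : ℝ → ℝ≥0∞}
    (hv : Measurable v) (hw : Measurable w) {C : ℝ≥0∞}
    (hH : Hardy1 a b q v w C) {x : ℝ} (hx : x ∈ EIoo a b) {lam : ℝ≥0∞}
    (hl0 : lam ≠ 0) (hlt : lam ≠ ∞) (hlV : lam < V1 a v x) :
    (∫⁻ t' in EIoo (x : EReal) b, w t') ^ (1 / q) ≤ C * lam⁻¹ := by
  have hq0 : (0:ℝ) < q := lt_of_lt_of_le one_pos hq
  -- the set where `1/v > lam` has positive measure near `x`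
  have hPmeas : MeasurableSet {s : ℝ | lam < (v s)⁻¹} :=
    measurableSet_lt measurable_const hv.inv
  have hpos : 0 < volume ({s : ℝ | lam < (v s)⁻¹} ∩ EIoo a x) := by
    rcases eq_zero_or_pos (volume ({s : ℝ | lam < (v s)⁻¹} ∩ EIoo a x)) with h0 | h
    · exfalso
      have hnull : (volume.restrict (EIoo a (x : EReal))) {s : ℝ | lam < (v s)⁻¹} = 0 := by
        rwa [Measure.restrict_apply hPmeas]
      have hae : ∀ᵐ s ∂(volume.restrict (EIoo a (x : EReal))), (v s)⁻¹ ≤ lam := by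
        have := (measure_eq_zero_iff_ae_notMem.mp hnull)
        filter_upwards [this] with s hs
        simpa [not_lt] using hs
      exact absurd (essSup_le_of_ae_le lam hae) (not_le.mpr hlV)
    · exact h
  -- choose a positive finite measure subset
  obtain ⟨n, hn⟩ : ∃ n : ℕ, 0 < volume ({s : ℝ | lam < (v s)⁻¹} ∩ EIoo a x ∩ Ioi (x - (n+1))) := by
    by_contra hcon
    push_neg at hcon
    simp only [le_zero_iff] at hcon
    have hcover : {s : ℝ | lam < (v s)⁻¹} ∩ EIoo a x
        ⊆ ⋃ n : ℕ, ({s : ℝ | lam < (v s)⁻¹} ∩ EIoo a x ∩ Ioi (x - (n+1))) := by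
      intro s hs
      obtain ⟨m, hm⟩ := exists_nat_gt (x - s)
      exact mem_iUnion.mpr ⟨m, hs, by simp only [mem_Ioi]; linarith⟩
    have : volume ({s : ℝ | lam < (v s)⁻¹} ∩ EIoo a x) = 0 :=
      le_antisymm ((measure_mono hcover).trans (by
        rw [measure_iUnion_null hcon])) zero_le
    exact absurd this hpos.ne'
  set E : Set ℝ := {s : ℝ | lam < (v s)⁻¹} ∩ EIoo a x ∩ Ioi (x - (n+1)) with hEdef
  have hE : MeasurableSet E := (hPmeas.inter (measurableSet_EIoo _ _)).inter measurableSet_Ioi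
  have hE0 : volume E ≠ 0 := hn.ne'
  have hEsub : E ⊆ EIoo a (x : EReal) := fun s hs => hs.1.2
  have hEfin : volume E ≠ ∞ := by
    have : E ⊆ Ioo (x - (n+1)) x := by
      intro s hs
      refine ⟨hs.2, ?_⟩
      exact_mod_cast hs.1.2.2
    refine ne_top_of_le_ne_top ?_ (measure_mono this)
    simp [Real.volume_Ioo]
  set f : ℝ → ℝ≥0∞ := E.indicator fun _ => (volume E)⁻¹ with hfdef
  have hf : Measurable f := measurable_const.indicator hE
  -- RHS of Hardy:
  have hRHS : (∫⁻ s in EIoo a b, f s * v s) ≤ lam⁻¹ := by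
    have hind : ∀ s, f s * v s = E.indicator (fun s => (volume E)⁻¹ * v s) s := by
      intro s
      by_cases h : s ∈ E <;> simp [hfdef, Set.indicator_of_mem, Set.indicator_of_notMem, h]
    calc (∫⁻ s in EIoo a b, f s * v s)
        ≤ ∫⁻ s, E.indicator (fun s => (volume E)⁻¹ * v s) s := by
          simp only [hind]
          exact setLIntegral_le_lintegral _ _
      _ = ∫⁻ s in E, (volume E)⁻¹ * v s := lintegral_indicator hE _
      _ = (volume E)⁻¹ * ∫⁻ s in E, v s := lintegral_const_mul _ hv
      _ ≤ (volume E)⁻¹ * (lam⁻¹ * volume E) := by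
          gcongr
          calc (∫⁻ s in E, v s) ≤ ∫⁻ _ in E, lam⁻¹ := by
                refine setLIntegral_mono measurable_const ?_
                intro s hs
                exact le_of_lt (ENNReal.lt_inv_iff_lt_inv.mp hs.1.1)
            _ = lam⁻¹ * volume E := by rw [setLIntegral_const]
      _ = lam⁻¹ * ((volume E)⁻¹ * volume E) := by ring
      _ = lam⁻¹ := by rw [ENNReal.inv_mul_cancel hE0 hEfin, mul_one]
  -- LHS of Hardy:
  have hinner : ∀ t' : ℝ, t' ∈ EIoo (x : EReal) b → (∫⁻ s in EIoo a (t' : EReal), f s) = 1 := by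
    intro t' ht'
    have hxt' : (x : EReal) < (t' : EReal) := ht'.1
    have hsub : E ⊆ EIoo a (t' : EReal) :=
      hEsub.trans (EIoo_subset_EIoo le_rfl hxt'.le)
    rw [hfdef, lintegral_indicator_const₀ hE.nullMeasurableSet]
    rw [Measure.restrict_apply hE, Set.inter_eq_self_of_subset_left hsub]
    exact ENNReal.inv_mul_cancel hE0 hEfin
  have hLHS : (∫⁻ t' in EIoo (x : EReal) b, w t') ^ (1 / q)
      ≤ (∫⁻ t in EIoo a b, (∫⁻ s in EIoo a (t : EReal), f s) ^ q * w t) ^ (1 / q) := by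
    refine ENNReal.rpow_le_rpow ?_ (by positivity)
    calc (∫⁻ t' in EIoo (x : EReal) b, w t')
        = ∫⁻ t' in EIoo (x : EReal) b, (∫⁻ s in EIoo a (t' : EReal), f s) ^ q * w t' := by
          refine setLIntegral_congr_fun (measurableSet_EIoo _ _) ?_
          intro t' ht'
          dsimp only
          rw [hinner t' ht', ENNReal.one_rpow, one_mul]
      _ ≤ _ := lintegral_mono_set (EIoo_subset_EIoo hx.1.le le_rfl)
  exact hLHS.trans ((hH f hf).trans (mul_le_mul_right hRHS C))

/-- Derived form of `keyA`: `∫_{(x,b)} w ≤ C^q / λ^q`. -/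
lemma keyA' {a b : EReal} {q : ℝ} (hq : 1 ≤ q) {v w : ℝ → ℝ≥0∞}
    (hv : Measurable v) (hw : Measurable w) {C : ℝ≥0∞}
    (hH : Hardy1 a b q v w C) {x : ℝ} (hx : x ∈ EIoo a b) {lam : ℝ≥0∞}
    (hl0 : lam ≠ 0) (hlt : lam ≠ ∞) (hlV : lam < V1 a v x) :
    (∫⁻ t' in EIoo (x : EReal) b, w t') ≤ C ^ q * (lam ^ q)⁻¹ := by
  have hq0 : (0:ℝ) < q := lt_of_lt_of_le one_pos hq
  have h := keyA hq hv hw hH hx hl0 hlt hlV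
  have h2 := ENNReal.rpow_le_rpow h (le_of_lt hq0)
  calc (∫⁻ t' in EIoo (x : EReal) b, w t')
      = ((∫⁻ t' in EIoo (x : EReal) b, w t') ^ (1/q)) ^ q := by
        rw [← ENNReal.rpow_mul, one_div, inv_mul_cancel₀ hq0.ne', ENNReal.rpow_one]
    _ ≤ (C * lam⁻¹) ^ q := h2
    _ = C ^ q * (lam ^ q)⁻¹ := by
        rw [ENNReal.mul_rpow_of_nonneg _ _ hq0.le, ← ENNReal.inv_rpow]

/-- Level-set estimate: `∫_{ {s ∈ (a,t) : λ < V(s)} } w ≤ C^q / λ^q`. -/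
lemma keyB {a b : EReal} {q : ℝ} (hq : 1 ≤ q) {v w : ℝ → ℝ≥0∞}
    (hv : Measurable v) (hw : Measurable w) {C : ℝ≥0∞}
    (hH : Hardy1 a b q v w C) {t : ℝ} (ht : t ∈ EIoo a b) {lam : ℝ≥0∞}
    (hl0 : lam ≠ 0) (hlt : lam ≠ ∞) :
    (∫⁻ s in EIoo a (t : EReal) ∩ {s | lam < V1 a v s}, w s) ≤ C ^ q * (lam ^ q)⁻¹ := by
  classical
  set S := EIoo a (t : EReal) ∩ {s | lam < V1 a v s} with hSdef
  have hS : MeasurableSet S := (measurableSet_EIoo _ _).inter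
    (measurableSet_lt measurable_const (V1_measurable a v))
  set good : ℚ → Prop := fun r => ((r : ℝ) ∈ EIoo a b ∧ lam < V1 a v (r : ℝ)) with hgdef
  set A : ℚ → Set ℝ := fun r => if good r then S ∩ Ioi (r : ℝ) else ∅ with hAdef
  have hApos : ∀ r, good r → A r = S ∩ Ioi (r : ℝ) := fun r h => if_pos h
  have hAneg : ∀ r, ¬ good r → A r = ∅ := fun r h => if_neg h
  have hAmeas : ∀ r, MeasurableSet (A r) := by
    intro r
    by_cases h : good r
    · rw [hApos r h]; exact hS.inter measurableSet_Ioi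
    · rw [hAneg r h]; exact MeasurableSet.empty
  set μ' := volume.withDensity w with hμ'def
  have hbound : ∀ r : ℚ, μ' (A r) ≤ C ^ q * (lam ^ q)⁻¹ := by
    intro r
    by_cases h : good r
    · have hsub : A r ⊆ EIoo ((r : ℝ) : EReal) b := by
        rw [hApos r h]
        rintro s ⟨⟨hs1, _⟩, hs2⟩
        exact ⟨by exact_mod_cast hs2, lt_trans hs1.2 ht.2⟩
      calc μ' (A r) = ∫⁻ s in A r, w s := withDensity_apply w (hAmeas r)
        _ ≤ ∫⁻ s in EIoo ((r : ℝ) : EReal) b, w s := lintegral_mono_set hsub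
        _ ≤ C ^ q * (lam ^ q)⁻¹ := keyA' hq hv hw hH h.1 hl0 hlt h.2
    · rw [hAneg r h]
      simp
  have hdir : Directed (· ⊆ ·) A := by
    intro r1 r2
    by_cases h1 : good r1
    · by_cases h2 : good r2
      · rcases le_total r1 r2 with h | h
        · refine ⟨r1, subset_rfl, ?_⟩
          rw [hApos r1 h1, hApos r2 h2]
          exact inter_subset_inter_right _ (Ioi_subset_Ioi (Rat.cast_le.mpr h))
        · refine ⟨r2, ?_, subset_rfl⟩
          rw [hApos r1 h1, hApos r2 h2]
          exact inter_subset_inter_right _ (Ioi_subset_Ioi (Rat.cast_le.mpr h))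
      · exact ⟨r1, subset_rfl, by rw [hAneg r2 h2]; exact empty_subset _⟩
    · exact ⟨r2, by rw [hAneg r1 h1]; exact empty_subset _, subset_rfl⟩
  set N := S \ ⋃ r : ℚ, A r with hNdef
  have hNsub : N.Subsingleton := by
    have key : ∀ s1 ∈ N, ∀ s2 ∈ N, ¬ s1 < s2 := by
      intro s1 h1 s2 h2 h12
      obtain ⟨r, hr1, hr2⟩ := exists_rat_btwn h12
      have hgood : good r := by
        refine ⟨⟨lt_trans h1.1.1.1 (by exact_mod_cast hr1),
          lt_trans (by exact_mod_cast hr2 : ((r:ℝ):EReal) < ((s2:ℝ):EReal)) ?_⟩,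
          lt_of_lt_of_le h1.1.2 (V1_mono a v hr1.le)⟩
        exact lt_trans h2.1.1.2 ht.2
      have : s2 ∈ A r := by
        rw [hApos r hgood]
        exact ⟨h2.1, hr2⟩
      exact h2.2 (mem_iUnion.mpr ⟨r, this⟩)
    intro p hp p' hp'
    by_contra hne
    rcases Ne.lt_or_gt hne with h | h
    · exact key p hp p' hp' h
    · exact key p' hp' p hp h
  have hScover : S ⊆ N ∪ ⋃ r : ℚ, A r := by
    intro s hs
    by_cases h : s ∈ ⋃ r : ℚ, A r
    · exact Or.inr h
    · exact Or.inl ⟨hs, h⟩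
  calc (∫⁻ s in S, w s) = μ' S := (withDensity_apply w hS).symm
    _ ≤ μ' N + μ' (⋃ r : ℚ, A r) := (measure_mono hScover).trans (measure_union_le _ _)
    _ ≤ 0 + (C ^ q * (lam ^ q)⁻¹) := by
        gcongr
        · rw [hμ'def, withDensity_apply' w N]
          exact le_of_eq (setLIntegral_measure_zero N w (hNsub.measure_zero volume))
        · rw [Directed.measure_iUnion hdir]
          exact iSup_le hbound
    _ = C ^ q * (lam ^ q)⁻¹ := zero_add _

noncomputable def cc (q ε : ℝ) : ℝ≥0∞ :=
  ((2 : ℝ≥0∞) ^ q * (1 - (2 : ℝ≥0∞) ^ (-(q * ε)))⁻¹) ^ (1 / q)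

lemma cc_base_pos {q ε : ℝ} (hq : 1 ≤ q) (hε : 0 < ε) :
    (2 : ℝ≥0∞) ^ q * (1 - (2 : ℝ≥0∞) ^ (-(q * ε)))⁻¹ ≠ 0 ∧
    (2 : ℝ≥0∞) ^ q * (1 - (2 : ℝ≥0∞) ^ (-(q * ε)))⁻¹ ≠ ∞ := by
  have hq0 : (0:ℝ) < q := lt_of_lt_of_le one_pos hq
  have hρ : (2 : ℝ≥0∞) ^ (-(q * ε)) < 1 :=
    ENNReal.rpow_lt_one_of_one_lt_of_neg (by norm_num) (by nlinarith)
  have h1 : (1 : ℝ≥0∞) - (2 : ℝ≥0∞) ^ (-(q * ε)) ≠ 0 := by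
    rw [ne_eq, tsub_eq_zero_iff_le]
    exact not_le.mpr hρ
  have h2 : (1 : ℝ≥0∞) - (2 : ℝ≥0∞) ^ (-(q * ε)) ≠ ∞ :=
    ne_top_of_le_ne_top (by norm_num) tsub_le_self
  constructor
  · exact mul_ne_zero (ENNReal.rpow_pos (by norm_num) (by norm_num)).ne'
      (ENNReal.inv_ne_zero.mpr h2)
  · exact ENNReal.mul_ne_top (ENNReal.rpow_ne_top_of_nonneg hq0.le (by norm_num))
      (ENNReal.inv_ne_top.mpr h1)

lemma cc_pos {q ε : ℝ} (hq : 1 ≤ q) (hε : 0 < ε) : 0 < cc q ε :=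
  ENNReal.rpow_pos (pos_iff_ne_zero.mpr (cc_base_pos hq hε).1) (cc_base_pos hq hε).2

lemma cc_ne_top {q ε : ℝ} (hq : 1 ≤ q) (hε : 0 < ε) : cc q ε ≠ ∞ :=
  ENNReal.rpow_ne_top_of_nonneg (by positivity) (cc_base_pos hq hε).2

/-- The main per-`t` estimate. -/
lemma keyC {a b : EReal} {q ε : ℝ} (hq : 1 ≤ q) (hε : 0 < ε) {v w : ℝ → ℝ≥0∞}
    (hv : Measurable v) (hw : Measurable w) {C : ℝ≥0∞} (hC0 : C ≠ 0)
    (hH : Hardy1 a b q v w C) {t : ℝ} (ht : t ∈ EIoo a b) :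
    (∫⁻ s in EIoo a (t : EReal), V1 a v s ^ (q * (ε + 1)) * w s) ^ (1 / q)
      ≤ cc q ε * C * V1 a v t ^ ε := by
  have hq0 : (0:ℝ) < q := lt_of_lt_of_le one_pos hq
  have hA : (0:ℝ) < q * (ε + 1) := by nlinarith
  set X := V1 a v t with hXdef
  have hVle : ∀ s ∈ EIoo a (t : EReal), V1 a v s ≤ X := fun s hs =>
    V1_mono a v (EReal.coe_lt_coe_iff.mp hs.2).le
  rcases eq_or_ne X 0 with hX0 | hX0
  · -- V(t) = 0 : the integral vanishes
    have hz : (∫⁻ s in EIoo a (t : EReal), V1 a v s ^ (q * (ε + 1)) * w s) = 0 := by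
      calc (∫⁻ s in EIoo a (t : EReal), V1 a v s ^ (q * (ε + 1)) * w s)
          = ∫⁻ _ in EIoo a (t : EReal), 0 := by
            refine setLIntegral_congr_fun (measurableSet_EIoo _ _) ?_
            intro s hs
            dsimp only
            have hVs : V1 a v s = 0 := le_antisymm (hX0 ▸ hVle s hs) zero_le
            rw [hVs, ENNReal.zero_rpow_of_pos hA, zero_mul]
        _ = 0 := lintegral_zero
    rw [hz, ENNReal.zero_rpow_of_pos (by positivity)]
    exact zero_le
  rcases eq_or_ne X ∞ with hXt | hXt
  · -- V(t) = ∞ : the right-hand side is infinite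
    rw [hXt, ENNReal.top_rpow_of_pos hε, ENNReal.mul_top
      (mul_ne_zero (cc_pos hq hε).ne' hC0)]
    exact le_top
  -- main case : 0 < V(t) < ∞
  have h20 : (2 : ℝ≥0∞) ≠ 0 := by norm_num
  have h2t : (2 : ℝ≥0∞) ≠ ∞ := by norm_num
  have h2pow0 : ∀ r : ℝ, (2 : ℝ≥0∞) ^ r ≠ 0 := fun r =>
    (ENNReal.rpow_pos (by norm_num) h2t).ne'
  have h2powt : ∀ r : ℝ, (2 : ℝ≥0∞) ^ r ≠ ∞ := by
    intro r
    rw [show r = -(-r) by ring, ENNReal.rpow_neg]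
    exact ENNReal.inv_ne_top.mpr (h2pow0 _)
  set u : ℕ → ℝ≥0∞ := fun k => X * (2 : ℝ≥0∞) ^ (-(k : ℝ)) with hudef
  have hu0 : ∀ k, u k ≠ 0 := fun k => mul_ne_zero hX0 (h2pow0 _)
  have hut : ∀ k, u k ≠ ∞ := fun k => ENNReal.mul_ne_top hXt (h2powt _)
  have huzero : u 0 = X := by simp [hudef]
  set g : ℝ → ℝ≥0∞ := fun s => V1 a v s ^ (q * (ε + 1)) * w s with hgdef
  set Z : Set ℝ := EIoo a (t : EReal) ∩ {s | V1 a v s = 0} with hZdef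
  set F : ℕ → Set ℝ := fun k =>
    EIoo a (t : EReal) ∩ {s | u (k + 1) < V1 a v s ∧ V1 a v s ≤ u k} with hFdef
  -- the cover
  have hcover : EIoo a (t : EReal) ⊆ Z ∪ ⋃ k : ℕ, F k := by
    intro s hs
    by_cases hs0 : V1 a v s = 0
    · exact Or.inl ⟨hs, hs0⟩
    · refine Or.inr ?_
      have hex : ∃ k : ℕ, u k < V1 a v s := by
        have heq : ∀ k : ℕ, u k = X * ((2 : ℝ≥0∞)⁻¹) ^ k := by
          intro k
          show X * (2 : ℝ≥0∞) ^ (-(k : ℝ)) = X * ((2 : ℝ≥0∞)⁻¹) ^ k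
          congr 1
          rw [ENNReal.rpow_neg, ENNReal.rpow_natCast, ← ENNReal.inv_pow]
        have htend : Tendsto u atTop (𝓝 0) := by
          have h1 : Tendsto (fun k : ℕ => ((2 : ℝ≥0∞)⁻¹) ^ k) atTop (𝓝 0) :=
            ENNReal.tendsto_pow_atTop_nhds_zero_of_lt_one
              (by norm_num : (2:ℝ≥0∞)⁻¹ < 1)
          have h2 := ENNReal.Tendsto.const_mul h1 (Or.inr hXt)
          rw [mul_zero] at h2
          simpa only [← heq] using h2
        exact (htend.eventually_lt_const (pos_iff_ne_zero.mpr hs0)).exists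
      have hk0 : u (Nat.find hex) < V1 a v s := Nat.find_spec hex
      have hk0ne : Nat.find hex ≠ 0 := by
        intro h
        rw [h, huzero] at hk0
        exact absurd hk0 (not_lt.mpr (hVle s hs))
      obtain ⟨m, hm⟩ := Nat.exists_eq_succ_of_ne_zero hk0ne
      refine mem_iUnion.mpr ⟨m, hs, ?_, ?_⟩
      · rw [← Nat.succ_eq_add_one, ← hm]; exact hk0
      · exact not_lt.mp (Nat.find_min hex (by omega))
  -- the integral over `Z` vanishes
  have hZzero : (∫⁻ s in Z, g s) = 0 := by
    have hZmeas : MeasurableSet Z := (measurableSet_EIoo _ _).inter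
      ((V1_measurable a v) (measurableSet_singleton 0))
    calc (∫⁻ s in Z, g s) = ∫⁻ _ in Z, 0 := by
          refine setLIntegral_congr_fun hZmeas ?_
          intro s hs
          rw [hgdef]
          simp only
          rw [hs.2, ENNReal.zero_rpow_of_pos hA, zero_mul]
      _ = 0 := lintegral_zero
  -- the dyadic estimate
  set ρ : ℝ≥0∞ := (2 : ℝ≥0∞) ^ (-(q * ε)) with hρdef
  have hterm : ∀ k : ℕ, (∫⁻ s in F k, g s)
      ≤ C ^ q * X ^ (q * ε) * ((2 : ℝ≥0∞) ^ q * ρ ^ k) := by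
    intro k
    have hwS : (∫⁻ s in F k, w s) ≤ C ^ q * ((u (k + 1)) ^ q)⁻¹ := by
      refine le_trans (lintegral_mono_set ?_)
        (keyB hq hv hw hH ht (hu0 (k+1)) (hut (k+1)))
      exact fun s hs => ⟨hs.1, hs.2.1⟩
    have step1 : (∫⁻ s in F k, g s) ≤ u k ^ (q * (ε + 1)) * (C ^ q * ((u (k + 1)) ^ q)⁻¹) := by
      calc (∫⁻ s in F k, g s) ≤ ∫⁻ s in F k, u k ^ (q * (ε + 1)) * w s := by
            refine setLIntegral_mono (measurable_const.mul hw) ?_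
            intro s hs
            exact mul_le_mul_left (ENNReal.rpow_le_rpow hs.2.2 hA.le) _
        _ = u k ^ (q * (ε + 1)) * ∫⁻ s in F k, w s := lintegral_const_mul _ hw
        _ ≤ _ := mul_le_mul_right hwS _
    refine step1.trans (le_of_eq ?_)
    -- now the rpow algebra
    have e1 : u k ^ (q * (ε + 1))
        = X ^ (q * (ε + 1)) * (2 : ℝ≥0∞) ^ (-(k : ℝ) * (q * (ε + 1))) := by
      rw [hudef]
      simp only
      rw [ENNReal.mul_rpow_of_ne_top hXt (h2powt _), ← ENNReal.rpow_mul]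
    have e2 : ((u (k + 1)) ^ q)⁻¹
        = X ^ (-q) * (2 : ℝ≥0∞) ^ (((k : ℝ) + 1) * q) := by
      rw [hudef]
      simp only
      rw [ENNReal.mul_rpow_of_ne_top hXt (h2powt _), ← ENNReal.rpow_mul,
        ENNReal.mul_inv (Or.inl (ENNReal.rpow_pos (pos_iff_ne_zero.mpr hX0) hXt).ne')
          (Or.inl (ENNReal.rpow_ne_top_of_nonneg hq0.le hXt)),
        ← ENNReal.rpow_neg, ← ENNReal.rpow_neg]
      push_cast
      ring_nf
    rw [e1, e2]
    have e3 : X ^ (q * (ε + 1)) * X ^ (-q) = X ^ (q * ε) := by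
      rw [← ENNReal.rpow_add _ _ hX0 hXt]
      congr 1
      ring
    have e4 : (2 : ℝ≥0∞) ^ (-(k : ℝ) * (q * (ε + 1))) * (2 : ℝ≥0∞) ^ (((k : ℝ) + 1) * q)
        = (2 : ℝ≥0∞) ^ q * ρ ^ k := by
      rw [← ENNReal.rpow_add _ _ h20 h2t, hρdef, ← ENNReal.rpow_natCast ((2:ℝ≥0∞) ^ (-(q*ε))),
        ← ENNReal.rpow_mul, ← ENNReal.rpow_add _ _ h20 h2t]
      congr 1
      ring
    calc X ^ (q * (ε + 1)) * (2 : ℝ≥0∞) ^ (-(k : ℝ) * (q * (ε + 1)))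
          * (C ^ q * (X ^ (-q) * (2 : ℝ≥0∞) ^ (((k : ℝ) + 1) * q)))
        = C ^ q * ((X ^ (q * (ε + 1)) * X ^ (-q))
            * ((2 : ℝ≥0∞) ^ (-(k : ℝ) * (q * (ε + 1))) * (2 : ℝ≥0∞) ^ (((k : ℝ) + 1) * q))) := by
          ring
      _ = C ^ q * X ^ (q * ε) * ((2 : ℝ≥0∞) ^ q * ρ ^ k) := by rw [e3, e4]; ring
  -- sum up
  have hsum : (∫⁻ s in EIoo a (t : EReal), g s)
      ≤ C ^ q * X ^ (q * ε) * ((2 : ℝ≥0∞) ^ q * (1 - ρ)⁻¹) := by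
    calc (∫⁻ s in EIoo a (t : EReal), g s)
        ≤ ∫⁻ s in Z ∪ ⋃ k : ℕ, F k, g s := lintegral_mono_set hcover
      _ ≤ (∫⁻ s in Z, g s) + ∫⁻ s in ⋃ k : ℕ, F k, g s := lintegral_union_le _ _ _
      _ ≤ 0 + ∑' k : ℕ, ∫⁻ s in F k, g s := by
          gcongr
          · exact le_of_eq hZzero
          · exact lintegral_iUnion_le _ _
      _ = ∑' k : ℕ, ∫⁻ s in F k, g s := zero_add _
      _ ≤ ∑' k : ℕ, C ^ q * X ^ (q * ε) * ((2 : ℝ≥0∞) ^ q * ρ ^ k) :=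
          ENNReal.tsum_le_tsum hterm
      _ = C ^ q * X ^ (q * ε) * ((2 : ℝ≥0∞) ^ q * (1 - ρ)⁻¹) := by
          calc ∑' k : ℕ, C ^ q * X ^ (q * ε) * ((2 : ℝ≥0∞) ^ q * ρ ^ k)
              = ∑' k : ℕ, (C ^ q * X ^ (q * ε) * (2 : ℝ≥0∞) ^ q) * ρ ^ k :=
                tsum_congr fun k => by ring
            _ = (C ^ q * X ^ (q * ε) * (2 : ℝ≥0∞) ^ q) * ∑' k : ℕ, ρ ^ k :=
                ENNReal.tsum_mul_left
            _ = (C ^ q * X ^ (q * ε) * (2 : ℝ≥0∞) ^ q) * (1 - ρ)⁻¹ := by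
                rw [ENNReal.tsum_geometric]
            _ = C ^ q * X ^ (q * ε) * ((2 : ℝ≥0∞) ^ q * (1 - ρ)⁻¹) := by ring
  calc (∫⁻ s in EIoo a (t : EReal), V1 a v s ^ (q * (ε + 1)) * w s) ^ (1 / q)
      ≤ (C ^ q * X ^ (q * ε) * ((2 : ℝ≥0∞) ^ q * (1 - ρ)⁻¹)) ^ (1 / q) :=
        ENNReal.rpow_le_rpow hsum (by positivity)
    _ = (C ^ q) ^ (1 / q) * (X ^ (q * ε)) ^ (1 / q)
          * ((2 : ℝ≥0∞) ^ q * (1 - ρ)⁻¹) ^ (1 / q) := by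
        rw [ENNReal.mul_rpow_of_nonneg _ _ (by positivity : (0:ℝ) ≤ 1/q),
          ENNReal.mul_rpow_of_nonneg (C ^ q) _ (by positivity : (0:ℝ) ≤ 1/q)]
    _ = C ^ (q * (1 / q)) * X ^ (q * ε * (1 / q)) * cc q ε := by
        rw [← ENNReal.rpow_mul C, ← ENNReal.rpow_mul X, cc, hρdef]
    _ = cc q ε * C * X ^ ε := by
        rw [mul_one_div_cancel hq0.ne', ENNReal.rpow_one,
          show q * ε * (1 / q) = ε by field_simp]
        ring

theorem stmt5 (q : ℝ) (hq : 1 ≤ q) :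
    ∀ ε : ℝ, 0 < ε → ∃ c : ℝ≥0∞, 0 < c ∧ c ≠ ∞ ∧
      ∀ (a b : EReal), a < b →
        ∀ v w : ℝ → ℝ≥0∞, IsWeight a b v → IsWeight a b w →
          ∀ C : ℝ≥0∞, 0 < C → C ≠ ∞ → Hardy1 a b q v w C →
            (∀ t ∈ EIoo a b,
                (∫⁻ s in EIoo a (t : EReal), V1 a v s ^ (q * (ε + 1)) * w s) ^ (1 / q)
                  ≤ c * C * V1 a v t ^ ε) ∧
              Aeps a b q ε (V1 a v) w ≤ c * C := by
  intro ε hε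
  refine ⟨cc q ε, cc_pos hq hε, cc_ne_top hq hε, ?_⟩
  intro a b hab v w hv hw C hC0 hCt hH
  have hmain : ∀ t ∈ EIoo a b,
      (∫⁻ s in EIoo a (t : EReal), V1 a v s ^ (q * (ε + 1)) * w s) ^ (1 / q)
        ≤ cc q ε * C * V1 a v t ^ ε :=
    fun t ht => keyC hq hε hv.1 hw.1 hC0.ne' hH ht
  refine ⟨hmain, ?_⟩
  rw [Aeps]
  refine iSup₂_le fun t ht => ?_
  calc V1 a v t ^ (-ε)
        * (∫⁻ s in EIoo a (t : EReal), V1 a v s ^ (q * (ε + 1)) * w s) ^ (1 / q)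
      ≤ V1 a v t ^ (-ε) * (cc q ε * C * V1 a v t ^ ε) := mul_le_mul_right (hmain t ht) _
    _ = cc q ε * C * (V1 a v t ^ (-ε) * V1 a v t ^ ε) := by ring
    _ ≤ cc q ε * C * 1 := by
        refine mul_le_mul_right ?_ _
        rw [ENNReal.rpow_neg]
        exact ENNReal.inv_mul_le_one _
    _ = cc q ε * C := mul_one _
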